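/- There exists a sequence of rotations f_n of the unit circle S¹, f_n(θ) = θ + 1/n², converging uniformly to the identity map, such that every point of S¹ is periodic for the identity but the non-autonomous system generated by (f_n) has no periodic point (since Σ 1/n² = π²/6 < 2π and the partial sums are strictly increasing). -/

import Mathlib

open Filter Metric Set

noncomputable def supD {X : Type*} [MetricSpace X] (g h : X → X) : ℝ :=
  ⨆ x, dist (g x) (h x)

def omega {X : Type*} (fn : ℕ → X → X) : ℕ → X → X
  | 0 => id
  | k + 1 => fn (k + 1) ∘ omega fn k

def omegaSeg {X : Type*} (fn : ℕ → X → X) (n : ℕ) : ℕ → X → X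
  | 0 => id
  | k + 1 => fn (n + k + 1) ∘ omegaSeg fn n k

noncomputable def S (k : ℕ) : ℝ := ∑ i ∈ Finset.range k, 1 / ((i : ℝ) + 1) ^ 2

lemma S_succ (p : ℕ) : S (p + 1) = S p + 1 / ((p : ℝ) + 1) ^ 2 := by
  rw [S, Finset.sum_range_succ]; rfl

lemma S_le (k : ℕ) (hk : 1 ≤ k) : S k ≤ 2 - 1 / k := by
  induction k with
  | zero => omega
  | succ n ih =>
    rcases Nat.lt_or_ge 1 (n + 1) with h | h
    · have hn : 1 ≤ n := by omega
      have hle := ih hn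
      have hn0 : (0:ℝ) < n := by positivity
      rw [S_succ]
      have key : (1:ℝ) / ((n:ℝ)+1)^2 ≤ 1/n - 1/(n+1) := by
        rw [div_sub_div _ _ (ne_of_gt hn0) (by positivity),
          div_le_div_iff₀ (by positivity) (by positivity)]
        nlinarith
      push_cast
      linarith
    · have : n = 0 := by omega
      subst this
      rw [S_succ]
      norm_num [S]

lemma S_pos (k : ℕ) (hk : 1 ≤ k) : 0 < S k := by
  have h1 : (1:ℝ) ≤ S k := by
    have : S 1 ≤ S k := by
      apply Finset.sum_le_sum_of_subset_of_nonneg (Finset.range_subset_range.mpr hk)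
      intro i _ _; positivity
    have h2 : S 1 = 1 := by simp [S]
    linarith
  linarith

theorem stmt15 :
    ∃ fn : ℕ → AddCircle (2 * Real.pi) → AddCircle (2 * Real.pi),
      (∀ n θ, fn n θ = θ + ((1 / (n : ℝ) ^ 2 : ℝ) : AddCircle (2 * Real.pi))) ∧
      TendstoUniformly fn id atTop ∧
      (∀ θ : AddCircle (2 * Real.pi), ∃ k : ℕ, 1 ≤ k ∧ id^[k] θ = θ) ∧
      ¬∃ θ : AddCircle (2 * Real.pi), ∃ k : ℕ, 1 ≤ k ∧
        ∀ n : ℕ, 1 ≤ n → omega fn (n * k) θ = θ := by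
  have hπ : (0:ℝ) < 2 * Real.pi := by positivity
  refine ⟨fun n θ => θ + ((1 / (n : ℝ) ^ 2 : ℝ) : AddCircle (2 * Real.pi)), fun n θ => rfl, ?_, ?_, ?_⟩
  · rw [Metric.tendstoUniformly_iff]
    intro ε hε
    obtain ⟨N, hN⟩ := exists_nat_gt (1 / ε)
    filter_upwards [eventually_ge_atTop (N + 1)] with n hn θ
    simp only [id_eq]
    have hbound : dist θ (θ + ((1 / (n : ℝ) ^ 2 : ℝ) : AddCircle (2 * Real.pi)))
        ≤ |1 / (n : ℝ) ^ 2| := by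
      rw [dist_eq_norm]
      have : θ - (θ + ((1 / (n : ℝ) ^ 2 : ℝ) : AddCircle (2 * Real.pi)))
          = ((-(1 / (n : ℝ) ^ 2) : ℝ) : AddCircle (2 * Real.pi)) := by
        rw [AddCircle.coe_neg, sub_add_eq_sub_sub, sub_self, zero_sub]
      rw [this]
      calc ‖((-(1 / (n : ℝ) ^ 2) : ℝ) : AddCircle (2 * Real.pi))‖
          ≤ ‖(-(1 / (n : ℝ) ^ 2) : ℝ)‖ := QuotientAddGroup.norm_mk_le_norm
        _ = |1 / (n : ℝ) ^ 2| := by rw [Real.norm_eq_abs, abs_neg]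
    have hn1 : (1:ℝ) ≤ (n:ℝ) := by exact_mod_cast Nat.one_le_iff_ne_zero.mpr (by omega)
    have hNn : (N:ℝ) ≤ (n:ℝ) := by exact_mod_cast by omega
    have hNpos : 0 < (N:ℝ) + 1 := by positivity
    have habs : |1 / (n : ℝ) ^ 2| = 1 / (n:ℝ)^2 := abs_of_pos (by positivity)
    have h1 : 1 / (n:ℝ)^2 ≤ 1 / (n:ℝ) := by
      apply div_le_div_of_nonneg_left one_pos.le (by positivity)
      nlinarith
    have h2 : 1 / (n:ℝ) < ε := by
      rw [div_lt_iff₀ (by positivity)]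
      have hNε : 1 / ε < (n:ℝ) := lt_of_lt_of_le hN hNn
      rw [div_lt_iff₀ hε] at hNε
      linarith
    calc dist θ _ ≤ |1 / (n : ℝ) ^ 2| := hbound
      _ < ε := by rw [habs]; linarith
  · intro θ; exact ⟨1, le_refl 1, rfl⟩
  · rintro ⟨θ, k, hk, h⟩
    have h1 := h 1 le_rfl
    rw [one_mul] at h1
    have key : ∀ m, omega (fun n θ => θ + ((1 / (n : ℝ) ^ 2 : ℝ) : AddCircle (2 * Real.pi))) m θ
        = θ + ((S m : ℝ) : AddCircle (2 * Real.pi)) := by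
      intro m
      induction m with
      | zero => simp [omega, S]
      | succ p ih =>
        show (omega _ p θ) + _ = _
        rw [ih, S_succ, add_assoc]
        push_cast
        norm_num
    rw [key k] at h1
    have hz : ((S k : ℝ) : AddCircle (2 * Real.pi)) = 0 := by
      have h0 : θ + ((S k : ℝ) : AddCircle (2 * Real.pi)) = θ + 0 := by rw [add_zero, h1]
      exact add_left_cancel h0
    rw [AddCircle.coe_eq_zero_iff] at hz
    obtain ⟨n, hn⟩ := hz
    have hpos := S_pos k hk
    have hub : S k < 2 * Real.pi := by
      have hl := S_le k hk
      have hk0 : (0:ℝ) ≤ 1 / k := by positivity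
      nlinarith [Real.pi_gt_three]
    have hn' : n • (2 * Real.pi) = S k := hn
    rcases lt_trichotomy n 0 with h' | h' | h'
    · have hle : (n : ℝ) ≤ -1 := by exact_mod_cast (by omega : n ≤ -1)
      have : n • (2 * Real.pi) ≤ -(2 * Real.pi) := by
        rw [zsmul_eq_mul]; nlinarith
      linarith
    · simp [h'] at hn'; linarith
    · have hge : (1:ℝ) ≤ n := by exact_mod_cast h'
      have : 2 * Real.pi ≤ n • (2 * Real.pi) := by
        rw [zsmul_eq_mul]; nlinarith
      linarith
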